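/- For all natural n ≥ 1, ỹ_{n+1} + ỹ_n ≤ 3c/2. -/
import Mathlib


noncomputable def c : ℝ := 4 / (9 - Real.sqrt 5)
noncomputable def φ : ℝ := (1 + Real.sqrt 5) / 2

lemma sqrt5_sq : Real.sqrt 5 ^ 2 = 5 := Real.sq_sqrt (by norm_num)

lemma phi_gt_one : 1 < φ := by
  have h := sqrt5_sq
  have h0 := Real.sqrt_nonneg 5
  unfold φ; nlinarith

lemma phi_sq : φ ^ 2 = φ + 1 := by
  unfold φ; linear_combination (1/4) * sqrt5_sq

lemma c_pos : 0 < c := by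
  have h := sqrt5_sq
  have h0 := Real.sqrt_nonneg 5
  have h3 : Real.sqrt 5 < 3 := by nlinarith
  unfold c; exact div_pos (by norm_num) (by linarith)

theorem stmt11 (y : ℕ → ℝ) (h1 : y 1 = c) (h2 : y 2 = c / 2)
    (hrec : ∀ n : ℕ, 1 ≤ n →
      2 * y (n + 1) = 2 * y n + c * (-1 : ℝ) ^ n * φ ^ ((1 : ℤ) - (n : ℤ)))
    (n : ℕ) (hn : 1 ≤ n) :
    y (n + 1) + y n ≤ 3 * c / 2 := by
  have hp1 := phi_gt_one
  have hp0 : (0:ℝ) < φ := by linarith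
  have hpne : φ ≠ 0 := ne_of_gt hp0
  have hpsq := phi_sq
  -- invariant
  have key : ∀ m : ℕ, 1 ≤ m →
      2 * φ ^ 3 * (y (m + 1) + y m)
        = 3 * c * φ ^ 3 - c * (1 + (-1 : ℝ) ^ m * φ ^ ((1 : ℤ) - (m : ℤ))) := by
    intro m hm
    induction m, hm using Nat.le_induction with
    | base =>
      simp only [Nat.cast_one, sub_self, zpow_zero, pow_one]
      rw [h1, h2]; ring
    | succ k hk ih =>
      have e1 := hrec k hk
      have e2 := hrec (k + 1) (by omega)
      have ht : φ * φ ^ (-(k : ℤ)) = φ ^ ((1 : ℤ) - (k : ℤ)) := by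
        rw [← zpow_one_add₀ hpne]; ring_nf
      have hcast : ((1 : ℤ) - ((k : ℤ) + 1)) = -(k : ℤ) := by ring
      push_cast at e2 ⊢
      rw [hcast] at e2 ⊢
      set t : ℝ := φ ^ ((1 : ℤ) - (k : ℤ)) with htdef
      set t' : ℝ := φ ^ (-(k : ℤ)) with htdef'
      have hs : ((-1 : ℝ) ^ (k + 1)) = -(-1 : ℝ) ^ k := by ring
      rw [hs] at e2 ⊢
      set s : ℝ := (-1 : ℝ) ^ k with hsdef
      linear_combination ih + φ ^ 3 * e1 + φ ^ 3 * e2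
        + ((1 - φ ^ 3) * c * s) * ht + (c * s * t' * (φ ^ 2 + 1)) * hpsq
  have hK := key n hn
  -- bound the tail term
  have ht1 : φ ^ ((1 : ℤ) - (n : ℤ)) ≤ 1 :=
    zpow_le_one_of_nonpos₀ (le_of_lt hp1) (by omega)
  have ht0 : (0:ℝ) < φ ^ ((1 : ℤ) - (n : ℤ)) := zpow_pos hp0 _
  have hst : (0:ℝ) ≤ 1 + (-1 : ℝ) ^ n * φ ^ ((1 : ℤ) - (n : ℤ)) := by
    rcases Nat.even_or_odd n with h | h
    · rw [h.neg_one_pow]; nlinarith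
    · rw [h.neg_one_pow]; nlinarith
  have hc := c_pos
  have hp3 : (0:ℝ) < φ ^ 3 := by positivity
  nlinarith [mul_nonneg (le_of_lt hc) hst]
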